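/- Let G be a finite non-abelian group of order pq² with p < q primes. Then |Cent(G)| = q + 2 or q² + 2. -/

import Mathlib

def Cent (G : Type*) [Group G] : Set (Subgroup G) :=
  {H | ∃ x : G, H = Subgroup.centralizer {x}}

open Subgroup Pointwise in
theorem card_cent_of_order_p_q_sq
    (G : Type*) [Group G] [Finite G] (p q : ℕ)
    (hp : p.Prime) (hq : q.Prime) (hpq : p < q)
    (hcard : Nat.card G = p * q ^ 2)
    (hna : ¬ ∀ a b : G, a * b = b * a) :
    (Cent G).ncard = q + 2 ∨ (Cent G).ncard = q ^ 2 + 2 := by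
  haveI : Fact p.Prime := ⟨hp⟩
  haveI : Fact q.Prime := ⟨hq⟩
  haveI : NeZero q := ⟨hq.ne_zero⟩
  have hp0 : p ≠ 0 := hp.ne_zero
  have hq2pos : 0 < q ^ 2 := pow_pos hq.pos 2
  have hq2 : (q:ℕ) ^ 2 ≠ 0 := hq2pos.ne'
  have hpdvd : ¬ p ∣ q ^ 2 := fun h =>
    hpq.ne ((Nat.prime_dvd_prime_iff_eq hp hq).mp (hp.dvd_of_dvd_pow h))
  have hqdvd : ¬ q ∣ p := fun h =>
    hpq.ne' ((Nat.prime_dvd_prime_iff_eq hq hp).mp h)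
  -- membership criterion for centralizers of singletons
  have hmemC : ∀ {g x : G}, x * g = g * x → g ∈ centralizer {x} := by
    intro g x hgx
    rw [mem_centralizer_iff]
    intro h hh
    rw [Set.mem_singleton_iff] at hh
    subst hh
    exact hgx
  have hxselfmem : ∀ x : G, x ∈ centralizer {x} := fun x => hmemC rfl
  -- factorization facts
  have hfac_q : (Nat.card G).factorization q = 2 := by
    rw [hcard, Nat.factorization_mul hp0 hq2, Finsupp.add_apply,
      Nat.factorization_eq_zero_of_not_dvd hqdvd, hq.factorization_pow,
      Finsupp.single_apply, if_pos rfl]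
  have hfac_p : (Nat.card G).factorization p = 1 := by
    rw [hcard, Nat.factorization_mul hp0 hq2, Finsupp.add_apply,
      hp.factorization, hq.factorization_pow, Finsupp.single_apply,
      Finsupp.single_apply, if_pos rfl, if_neg hpq.ne']
    norm_num
  -- the (normal) Sylow q-subgroup
  obtain ⟨Q⟩ : Nonempty (Sylow q G) := inferInstance
  have hQcard : Nat.card (Q : Subgroup G) = q ^ 2 := by
    rw [Q.card_eq_multiplicity, hfac_q]
  have hQindex : (Q : Subgroup G).index = p := by
    have h := (Q : Subgroup G).card_mul_index
    rw [hQcard, hcard, mul_comm p (q ^ 2)] at h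
    exact Nat.eq_of_mul_eq_mul_left hq2pos h
  have hnq : Nat.card (Sylow q G) = 1 := by
    have h1 : Nat.card (Sylow q G) ∣ p := by
      have := Sylow.card_dvd_index Q
      rwa [hQindex] at this
    rcases (Nat.Prime.eq_one_or_self_of_dvd hp _ h1) with h | h
    · exact h
    · exfalso
      have hmod := card_sylow_modEq_one q G
      rw [h] at hmod
      have : p % q = 1 % q := hmod
      rw [Nat.mod_eq_of_lt hpq, Nat.mod_eq_of_lt hq.one_lt] at this
      exact hp.one_lt.ne' this
  haveI hQnormal : (Q : Subgroup G).Normal := by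
    rw [← normalizer_eq_top_iff, ← Subgroup.index_eq_one]
    exact (Sylow.card_eq_index_normalizer Q).symm.trans hnq
  -- Q is commutative
  have hQcomm : ∀ a b : G, a ∈ Q → b ∈ Q → a * b = b * a := by
    intro a b ha hb
    have := IsPGroup.commutative_of_card_eq_prime_sq (G := (Q : Subgroup G)) (p := q)
      hQcard ⟨a, ha⟩ ⟨b, hb⟩
    exact Subtype.ext_iff.mp this
  have hQle : ∀ y : G, y ∈ Q → (Q : Subgroup G) ≤ centralizer {y} := by
    intro y hy a ha
    exact hmemC (hQcomm y a hy ha)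
  -- divisor sandwich
  have hdiv : ∀ m : ℕ, q ^ 2 ∣ m → m ∣ p * q ^ 2 → m = q ^ 2 ∨ m = p * q ^ 2 := by
    rintro m ⟨k, rfl⟩ hm
    have hk : k ∣ p := by
      have : q ^ 2 * k ∣ q ^ 2 * p := by rwa [mul_comm p (q ^ 2)] at hm
      exact (mul_dvd_mul_iff_left hq2).mp this
    rcases hp.eq_one_or_self_of_dvd k hk with h | h
    · left; rw [h, mul_one]
    · right; rw [h, mul_comm]
  -- claim A : centralizers of non-central elements of Q equal Q
  have claimA : ∀ y : G, y ∈ Q → y ∉ Subgroup.center G →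
      centralizer {y} = (Q : Subgroup G) := by
    intro y hyQ hyZ
    have hle := hQle y hyQ
    have h1 : q ^ 2 ∣ Nat.card (centralizer {y}) := hQcard ▸ card_dvd_of_le hle
    have h2 : Nat.card (centralizer {y}) ∣ p * q ^ 2 :=
      hcard ▸ Subgroup.card_subgroup_dvd_card _
    rcases hdiv _ h1 h2 with h | h
    · exact (Subgroup.eq_of_le_of_card_ge hle (le_of_eq (h.trans hQcard.symm))).symm
    · exfalso
      have htop : centralizer {y} = ⊤ :=
        Subgroup.eq_top_of_card_eq _ (h.trans hcard.symm)
      exact hyZ (Subgroup.centralizer_eq_top_iff_subset.mp htop rfl)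
  -- Q is not contained in the center
  have hQnotcentral : ¬ (Q : Subgroup G) ≤ Subgroup.center G := by
    intro hle
    have h1 : q ^ 2 ∣ Nat.card (Subgroup.center G) := hQcard ▸ card_dvd_of_le hle
    have h2 : Nat.card (Subgroup.center G) ∣ p * q ^ 2 :=
      hcard ▸ Subgroup.card_subgroup_dvd_card _
    rcases hdiv _ h1 h2 with h | h
    · -- center has index p, so G/Z is cyclic, so G is abelian
      have hidx : (Subgroup.center G).index = p := by
        have hh := (Subgroup.center G).card_mul_index
        rw [h, hcard, mul_comm p (q ^ 2)] at hh
        exact Nat.eq_of_mul_eq_mul_left hq2pos hh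
      haveI hcyc : IsCyclic (G ⧸ Subgroup.center G) := by
        apply isCyclic_of_prime_card (p := p)
        rw [← Subgroup.index_eq_card, hidx]
      exact hna (commutative_of_cyclic_center_quotient
        (QuotientGroup.mk' (Subgroup.center G)) (QuotientGroup.ker_mk' _).le)
    · have htop : Subgroup.center G = ⊤ :=
        Subgroup.eq_top_of_card_eq _ (h.trans hcard.symm)
      refine hna fun a b => ?_
      have hb : b ∈ Subgroup.center G := by rw [htop]; trivial
      exact (Subgroup.mem_center_iff.mp hb a)
  obtain ⟨y, hyQ, hyZ⟩ : ∃ y ∈ (Q : Subgroup G), y ∉ Subgroup.center G :=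
    SetLike.not_le_iff_exists.mp hQnotcentral
  have hZQ : Subgroup.center G ≤ (Q : Subgroup G) :=
    (claimA y hyQ hyZ) ▸ Subgroup.center_le_centralizer {y}
  have hZdvd : Nat.card (Subgroup.center G) ∣ q ^ 2 := hQcard ▸ card_dvd_of_le hZQ
  -- claim B
  have claimB : ∀ x : G, x ∉ Q → centralizer {x} ⊓ (Q : Subgroup G) = Subgroup.center G := by
    intro x hx
    apply le_antisymm
    · intro y' hy'
      rw [Subgroup.mem_inf] at hy'
      obtain ⟨hy'C, hy'Q⟩ := hy'
      by_contra hy'Z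
      have hcy' := claimA y' hy'Q hy'Z
      have hxc : x ∈ centralizer {y'} :=
        hmemC ((mem_centralizer_iff.mp hy'C) x rfl).symm
      rw [hcy'] at hxc
      exact hx hxc
    · exact le_inf (Subgroup.center_le_centralizer _) hZQ
  -- centralizer {x} ⊔ Q = ⊤ for x ∉ Q
  have hsupC : ∀ x : G, x ∉ Q → centralizer {x} ⊔ (Q : Subgroup G) = ⊤ := by
    intro x hx
    have hQJ : (Q : Subgroup G) ≤ centralizer {x} ⊔ (Q : Subgroup G) := le_sup_right
    have h1 : q ^ 2 ∣ Nat.card (centralizer {x} ⊔ (Q : Subgroup G) : Subgroup G) :=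
      hQcard ▸ card_dvd_of_le hQJ
    have h2 : Nat.card (centralizer {x} ⊔ (Q : Subgroup G) : Subgroup G) ∣ p * q ^ 2 :=
      hcard ▸ Subgroup.card_subgroup_dvd_card _
    rcases hdiv _ h1 h2 with h | h
    · exfalso
      have hQeq : (Q : Subgroup G) = centralizer {x} ⊔ (Q : Subgroup G) :=
        Subgroup.eq_of_le_of_card_ge hQJ (le_of_eq (h.trans hQcard.symm))
      have : x ∈ (Q : Subgroup G) := by
        rw [hQeq]
        exact Subgroup.mem_sup_left (hxselfmem x)
      exact hx this
    · exact Subgroup.eq_top_of_card_eq _ (h.trans hcard.symm)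
  -- the cardinality of centralizers of elements outside Q
  have hcardC : ∀ x : G, x ∉ Q →
      Nat.card (centralizer {x}) = Nat.card (Subgroup.center G) * p := by
    intro x hx
    have h1 : (Q : Subgroup G).relIndex (centralizer {x} ⊔ (Q : Subgroup G)) =
        (Q : Subgroup G).relIndex (centralizer {x}) :=
      Subgroup.relIndex_sup_right (centralizer {x}) (Q : Subgroup G)
    rw [hsupC x hx, Subgroup.relIndex_top_right, hQindex] at h1
    have h2 := Subgroup.card_mul_index ((Q : Subgroup G).subgroupOf (centralizer {x}))
    have h3 : ((Q : Subgroup G).subgroupOf (centralizer {x})).index = p := h1.symm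
    have h4 : Nat.card ((Q : Subgroup G).subgroupOf (centralizer {x})) =
        Nat.card (Subgroup.center G) := by
      have e1 : ((Q : Subgroup G)).subgroupOf (centralizer {x}) =
          (Subgroup.center G).subgroupOf (centralizer {x}) := by
        rw [← Subgroup.inf_subgroupOf_right, inf_comm, claimB x hx]
      rw [e1]
      exact Nat.card_congr (Subgroup.subgroupOfEquivOfLe
        (Subgroup.center_le_centralizer _)).toEquiv
    rw [h3, h4] at h2
    exact h2.symm
  -- every element of order p is outside Q
  have hordp_notQ : ∀ g : G, orderOf g = p → g ∉ Q := by
    intro g hg hmem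
    have h1 : orderOf (⟨g, hmem⟩ : (Q : Subgroup G)) = p := by
      rw [Subgroup.orderOf_mk, hg]
    have := h1 ▸ orderOf_dvd_natCard (⟨g, hmem⟩ : (Q : Subgroup G))
    rw [hQcard] at this
    exact hpdvd this
  have hZcoprime : Nat.Coprime p (Nat.card (Subgroup.center G)) :=
    hp.coprime_iff_not_dvd.mpr (fun h => hpdvd (h.trans hZdvd))
  -- key lemma: centralizer of an element of order p
  have hCg : ∀ g : G, orderOf g = p →
      centralizer {g} = Subgroup.center G ⊔ Subgroup.zpowers g := by
    intro g hg
    have hgQ := hordp_notQ g hg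
    have hle : Subgroup.center G ⊔ Subgroup.zpowers g ≤ centralizer {g} :=
      sup_le (Subgroup.center_le_centralizer _) (Subgroup.zpowers_le.mpr (hxselfmem g))
    refine (Subgroup.eq_of_le_of_card_ge hle ?_).symm
    have hd1 : Nat.card (Subgroup.center G) ∣
        Nat.card (Subgroup.center G ⊔ Subgroup.zpowers g : Subgroup G) :=
      card_dvd_of_le le_sup_left
    have hd2 : p ∣ Nat.card (Subgroup.center G ⊔ Subgroup.zpowers g : Subgroup G) := by
      have := card_dvd_of_le (le_sup_right (a := Subgroup.center G)
        (b := Subgroup.zpowers g))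
      rwa [Nat.card_zpowers, hg] at this
    have hdd : Nat.card (Subgroup.center G) * p ∣
        Nat.card (Subgroup.center G ⊔ Subgroup.zpowers g : Subgroup G) :=
      Nat.Coprime.mul_dvd_of_dvd_of_dvd (hZcoprime.symm) hd1 hd2
    rw [hcardC g hgQ]
    exact Nat.le_of_dvd Nat.card_pos hdd
  -- structure of centralizers of elements outside Q
  have hCx : ∀ x : G, x ∉ Q → ∃ g : G, orderOf g = p ∧
      centralizer {x} = Subgroup.center G ⊔ Subgroup.zpowers g := by
    intro x hx
    have hdvd : p ∣ Nat.card (centralizer {x}) := by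
      rw [hcardC x hx]; exact dvd_mul_left p _
    obtain ⟨g₀, hg₀⟩ := exists_prime_orderOf_dvd_card' (G := ↥(centralizer ({x} : Set G))) p hdvd
    have hgo : orderOf (g₀ : G) = p := by rw [Subgroup.orderOf_coe, hg₀]
    refine ⟨(g₀ : G), hgo, ?_⟩
    have hle : Subgroup.center G ⊔ Subgroup.zpowers (g₀ : G) ≤ centralizer {x} :=
      sup_le (Subgroup.center_le_centralizer _) (Subgroup.zpowers_le.mpr g₀.2)
    refine (Subgroup.eq_of_le_of_card_ge hle ?_).symm
    rw [← hCg _ hgo, hcardC x hx, hcardC _ (hordp_notQ _ hgo)]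
  -- the set of "other" centralizers
  set S : Set (Subgroup G) :=
    {H | ∃ g : G, orderOf g = p ∧ H = Subgroup.center G ⊔ Subgroup.zpowers g} with hSdef
  have hCentEq : Cent G = insert ⊤ (insert (Q : Subgroup G) S) := by
    ext H
    simp only [Set.mem_insert_iff]
    constructor
    · rintro ⟨x, rfl⟩
      by_cases hx1 : x ∈ Subgroup.center G
      · left
        exact Subgroup.centralizer_eq_top_iff_subset.mpr (Set.singleton_subset_iff.mpr hx1)
      · by_cases hxQ : x ∈ Q
        · right; left
          exact claimA x hxQ hx1
        · right; right
          exact hCx x hxQ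
    · intro h
      rcases h with h | h | h
      · refine ⟨1, ?_⟩
        rw [h]
        exact (Subgroup.centralizer_eq_top_iff_subset.mpr
          (Set.singleton_subset_iff.mpr (Subgroup.one_mem _))).symm
      · exact ⟨y, h.trans (claimA y hyQ hyZ).symm⟩
      · obtain ⟨g, hg, heq⟩ := h
        exact ⟨g, heq.trans (hCg g hg).symm⟩
  have hfinS : S.Finite := Set.toFinite _
  have htop_not : (⊤ : Subgroup G) ∉ insert (Q : Subgroup G) S := by
    intro h
    rw [Set.mem_insert_iff] at h
    rcases h with h | h
    · rw [← h, Subgroup.card_top, hcard] at hQcard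
      have h5 : p * q ^ 2 = 1 * q ^ 2 := by rw [one_mul]; exact hQcard
      exact hp.one_lt.ne' (Nat.eq_of_mul_eq_mul_right hq2pos h5)
    · obtain ⟨g, hg, heq⟩ := h
      have htopc : centralizer ({g} : Set G) = ⊤ := by rw [hCg g hg, heq]
      have : g ∈ Subgroup.center G :=
        Subgroup.centralizer_eq_top_iff_subset.mp htopc rfl
      exact hordp_notQ g hg (hZQ this)
  have hQ_not : (Q : Subgroup G) ∉ S := by
    rintro ⟨g, hg, heq⟩
    have : g ∈ (Q : Subgroup G) := by
      rw [heq]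
      exact Subgroup.mem_sup_right (Subgroup.mem_zpowers g)
    exact hordp_notQ g hg this
  have hncard : (Cent G).ncard = S.ncard + 2 := by
    rw [hCentEq, Set.ncard_insert_of_notMem htop_not (hfinS.insert _),
      Set.ncard_insert_of_notMem hQ_not hfinS]
  -- Sylow p-subgroups
  have hPcard : ∀ P : Sylow p G, Nat.card (P : Subgroup G) = p := by
    intro P
    rw [P.card_eq_multiplicity, hfac_p, pow_one]
  have hSylP_ex : ∀ P : Sylow p G, ∃ g : G, orderOf g = p ∧
      Subgroup.zpowers g = (P : Subgroup G) := by
    intro P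
    rcases Subgroup.bot_or_exists_ne_one (P : Subgroup G) with h | ⟨g, hgP, hg1⟩
    · exfalso
      have := hPcard P
      rw [h, Subgroup.card_bot] at this
      exact hp.one_lt.ne' this.symm
    · have hdvd : orderOf g ∣ p := by
        have h1 : orderOf (⟨g, hgP⟩ : (P : Subgroup G)) = orderOf g :=
          Subgroup.orderOf_mk g hgP
        have := orderOf_dvd_natCard (⟨g, hgP⟩ : (P : Subgroup G))
        rwa [hPcard P, h1] at this
      have hord : orderOf g = p := by
        rcases hp.eq_one_or_self_of_dvd _ hdvd with h | h
        · exact absurd (orderOf_eq_one_iff.mp h) hg1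
        · exact h
      refine ⟨g, hord, ?_⟩
      apply Subgroup.eq_of_le_of_card_ge (Subgroup.zpowers_le.mpr hgP)
      rw [hPcard P, Nat.card_zpowers, hord]
  have hSeq : S = Set.range (fun P : Sylow p G => Subgroup.center G ⊔ (P : Subgroup G)) := by
    ext H
    constructor
    · rintro ⟨g, hg, rfl⟩
      have hzc : Nat.card (Subgroup.zpowers g) = p ^ (Nat.card G).factorization p := by
        rw [Nat.card_zpowers, hg, hfac_p, pow_one]
      refine ⟨Sylow.ofCard (Subgroup.zpowers g) hzc, ?_⟩
      simp only [Sylow.coe_ofCard]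
    · rintro ⟨P, rfl⟩
      obtain ⟨g, hg, hzp⟩ := hSylP_ex P
      exact ⟨g, hg, by rw [hzp]⟩
  have hfinj : Function.Injective
      (fun P : Sylow p G => Subgroup.center G ⊔ (P : Subgroup G)) := by
    intro P₁ P₂ h
    simp only at h
    obtain ⟨g, hg, hzp1⟩ := hSylP_ex P₁
    have hgP₁ : g ∈ (P₁ : Subgroup G) := hzp1 ▸ Subgroup.mem_zpowers g
    have hgmem : g ∈ Subgroup.center G ⊔ (P₂ : Subgroup G) := by
      rw [← h]
      exact Subgroup.mem_sup_right hgP₁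
    have hgset : g ∈ ((Subgroup.center G : Set G) * ((P₂ : Subgroup G) : Set G)) := by
      rw [← Subgroup.normal_mul]
      exact hgmem
    rw [Set.mem_mul] at hgset
    obtain ⟨z, hz, k, hk, hzk⟩ := hgset
    have hcom : Commute z k := (Subgroup.mem_center_iff.mp hz k).symm
    have hkp : k ^ p = 1 := by
      have h1 : orderOf k ∣ p := by
        have h2 : orderOf (⟨k, hk⟩ : (P₂ : Subgroup G)) = orderOf k :=
          Subgroup.orderOf_mk k hk
        have := orderOf_dvd_natCard (⟨k, hk⟩ : (P₂ : Subgroup G))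
        rwa [hPcard P₂, h2] at this
      exact orderOf_dvd_iff_pow_eq_one.mp h1
    have hgp : g ^ p = 1 := by rw [← hg]; exact pow_orderOf_eq_one g
    have hzp' : z ^ p = 1 := by
      have h6 : (z * k) ^ p = z ^ p * k ^ p := hcom.mul_pow p
      rw [hzk, hgp, hkp, mul_one] at h6
      exact h6.symm
    have hz1 : z = 1 := by
      have h1 : orderOf z ∣ p := orderOf_dvd_iff_pow_eq_one.mpr hzp'
      have h2 : orderOf z ∣ q ^ 2 := by
        have h3 : orderOf (⟨z, hz⟩ : Subgroup.center G) = orderOf z :=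
          Subgroup.orderOf_mk z hz
        have := orderOf_dvd_natCard (⟨z, hz⟩ : Subgroup.center G)
        rw [h3] at this
        exact this.trans hZdvd
      have hdg : orderOf z ∣ Nat.gcd p (q ^ 2) := Nat.dvd_gcd h1 h2
      rw [Nat.Coprime.gcd_eq_one (hp.coprime_iff_not_dvd.mpr hpdvd)] at hdg
      exact orderOf_eq_one_iff.mp (Nat.dvd_one.mp hdg)
    have hgk : g = k := by rw [← hzk, hz1, one_mul]
    have hgP₂ : g ∈ (P₂ : Subgroup G) := hgk ▸ hk
    have hzp2 : Subgroup.zpowers g = (P₂ : Subgroup G) := by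
      apply Subgroup.eq_of_le_of_card_ge (Subgroup.zpowers_le.mpr hgP₂)
      rw [hPcard P₂, Nat.card_zpowers, hg]
    exact Sylow.ext (hzp1.symm.trans hzp2)
  have hScard : S.ncard = Nat.card (Sylow p G) := by
    rw [hSeq, ← Set.image_univ, Set.ncard_image_of_injective _ hfinj, Set.ncard_univ]
  -- the number of Sylow p-subgroups divides q^2 and is not 1
  obtain ⟨P₀⟩ : Nonempty (Sylow p G) := inferInstance
  have hP₀index : (P₀ : Subgroup G).index = q ^ 2 := by
    have h := (P₀ : Subgroup G).card_mul_index
    rw [hPcard P₀, hcard] at h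
    exact Nat.eq_of_mul_eq_mul_left hp.pos h
  have hn_dvd : Nat.card (Sylow p G) ∣ q ^ 2 := by
    have := Sylow.card_dvd_index P₀
    rwa [hP₀index] at this
  have hn_ne1 : Nat.card (Sylow p G) ≠ 1 := by
    intro h1
    haveI hP₀normal : (P₀ : Subgroup G).Normal := by
      rw [← normalizer_eq_top_iff, ← Subgroup.index_eq_one]
      exact (Sylow.card_eq_index_normalizer P₀).symm.trans h1
    have hdisj : Disjoint (P₀ : Subgroup G) (Q : Subgroup G) := by
      rw [disjoint_iff, ← Subgroup.card_eq_one]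
      have hd1 : Nat.card ((P₀ : Subgroup G) ⊓ (Q : Subgroup G) : Subgroup G) ∣ p := by
        have := card_dvd_of_le (inf_le_left (a := (P₀ : Subgroup G)) (b := (Q : Subgroup G)))
        rwa [hPcard P₀] at this
      have hd2 : Nat.card ((P₀ : Subgroup G) ⊓ (Q : Subgroup G) : Subgroup G) ∣ q ^ 2 := by
        have := card_dvd_of_le (inf_le_right (a := (P₀ : Subgroup G)) (b := (Q : Subgroup G)))
        rwa [hQcard] at this
      have := Nat.dvd_gcd hd1 hd2
      rwa [Nat.Coprime.gcd_eq_one (hp.coprime_iff_not_dvd.mpr hpdvd), Nat.dvd_one] at this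
    obtain ⟨g, hg, hzp⟩ := hSylP_ex P₀
    have hQC : (Q : Subgroup G) ≤ centralizer {g} := by
      intro a ha
      exact hmemC (Subgroup.commute_of_normal_of_disjoint _ _ hP₀normal hQnormal hdisj
        g a (hzp ▸ Subgroup.mem_zpowers g) ha)
    have hd : q ^ 2 ∣ Nat.card (Subgroup.center G) * p := by
      have := card_dvd_of_le hQC
      rwa [hQcard, hcardC g (hordp_notQ g hg)] at this
    have hcop : Nat.Coprime (q ^ 2) p := (hp.coprime_iff_not_dvd.mpr hpdvd).symm
    have hq2Z : q ^ 2 ∣ Nat.card (Subgroup.center G) := hcop.dvd_of_dvd_mul_right hd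
    have hZcard : Nat.card (Subgroup.center G) = q ^ 2 := Nat.dvd_antisymm hZdvd hq2Z
    have hZeqQ : Subgroup.center G = (Q : Subgroup G) :=
      Subgroup.eq_of_le_of_card_ge hZQ (le_of_eq (hQcard.trans hZcard.symm))
    rw [← hZeqQ] at hyQ
    exact hyZ hyQ
  rcases (Nat.dvd_prime_pow hq).mp hn_dvd with ⟨i, hile, hi⟩
  interval_cases i
  · exact absurd (by simpa using hi) hn_ne1
  · left; rw [hncard, hScard, hi, pow_one]
  · right; rw [hncard, hScard, hi]
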